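/- arXiv:0804.3172 — 2 statements merged into one kernel-verified Lean document; each statement's English description precedes it below -/
import Mathlib

section
/- Let F be a Keller map and let A_F be its non-proper value set. Then the restriction of F, as a map from ℂ² \ F⁻¹(A_F) (with the subspace topology) to ℂ² \ A_F (with the subspace topology), is a covering map. -/
open MvPolynomial Filter

/-- Evaluation of a bivariate polynomial at a point of `ℂ × ℂ`. -/
noncomputable def evalPoly (P : MvPolynomial (Fin 2) ℂ) (p : ℂ × ℂ) : ℂ :=
  MvPolynomial.eval ![p.1, p.2] P

/-- The polynomial map `ℂ² → ℂ²` given by a pair of polynomials. -/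
noncomputable def polyMap (P Q : MvPolynomial (Fin 2) ℂ) (p : ℂ × ℂ) : ℂ × ℂ :=
  (evalPoly P p, evalPoly Q p)

/-- `(P, Q)` is a Keller map: the Jacobian determinant is a nonzero constant. -/
def IsKeller (P Q : MvPolynomial (Fin 2) ℂ) : Prop :=
  ∃ c : ℂ, c ≠ 0 ∧
    pderiv 0 P * pderiv 1 Q - pderiv 1 P * pderiv 0 Q = MvPolynomial.C c

/-- `P` is a rational polynomial: away from finitely many values `c`, the fiber
`P = c` is homeomorphic to `ℂ` minus a finite set of points. -/
def IsRationalPoly (P : MvPolynomial (Fin 2) ℂ) : Prop :=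
  ∃ S : Finset ℂ, ∀ c ∉ S, ∃ T : Finset ℂ,
    Nonempty ({p : ℂ × ℂ // evalPoly P p = c} ≃ₜ {z : ℂ // z ∉ T})

/-- The polynomial map `(P, Q)` has a polynomial inverse. -/
def IsInvertible (P Q : MvPolynomial (Fin 2) ℂ) : Prop :=
  ∃ A B : MvPolynomial (Fin 2) ℂ,
    polyMap A B ∘ polyMap P Q = id ∧ polyMap P Q ∘ polyMap A B = id

/-- The non-proper value set of a map `F : ℂ² → ℂ²`. -/
def nonProperSet (F : ℂ × ℂ → ℂ × ℂ) : Set (ℂ × ℂ) :=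
  {a | ∃ b : ℕ → ℂ × ℂ,
    Tendsto (fun i => ‖b i‖) atTop atTop ∧ Tendsto (fun i => F (b i)) atTop (nhds a)}

noncomputable section
open Topology

def lin2 (a b : ℂ) : ℂ × ℂ →L[ℂ] ℂ :=
  a • ContinuousLinearMap.fst ℂ ℂ ℂ + b • ContinuousLinearMap.snd ℂ ℂ ℂ

lemma lin2_apply (a b : ℂ) (w : ℂ × ℂ) : lin2 a b w = a * w.1 + b * w.2 := by
  simp [lin2]

lemma hasStrictFDerivAt_evalPoly (P : MvPolynomial (Fin 2) ℂ) (z : ℂ × ℂ) :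
    HasStrictFDerivAt (evalPoly P)
      (lin2 (evalPoly (pderiv 0 P) z) (evalPoly (pderiv 1 P) z)) z := by
  induction P using MvPolynomial.induction_on with
  | C a =>
      have h1 : evalPoly (C a) = fun _ : ℂ × ℂ => a := funext fun w => by simp [evalPoly]
      have h2 : lin2 (evalPoly (pderiv 0 (C a)) z) (evalPoly (pderiv 1 (C a)) z) = 0 := by
        refine ContinuousLinearMap.ext fun w => ?_
        simp [lin2_apply, evalPoly]
      rw [h1, h2]
      exact hasStrictFDerivAt_const a z
  | add p q hp hq =>
      have := hp.add hq
      refine (this.congr_of_eventuallyEq ?_).congr_fderiv ?_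
      · exact Filter.Eventually.of_forall fun w => by simp [evalPoly]
      · refine ContinuousLinearMap.ext fun w => ?_
        simp [lin2_apply, evalPoly]
        ring
  | mul_X p n hp =>
      fin_cases n
      · have hx : HasStrictFDerivAt (fun w : ℂ × ℂ => w.1)
            (ContinuousLinearMap.fst ℂ ℂ ℂ) z :=
          (ContinuousLinearMap.fst ℂ ℂ ℂ).hasStrictFDerivAt
        have := hp.mul hx
        refine (this.congr_of_eventuallyEq ?_).congr_fderiv ?_
        · exact Filter.Eventually.of_forall fun w => by simp [evalPoly]
        · refine ContinuousLinearMap.ext fun w => ?_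
          simp [lin2_apply, evalPoly, pderiv_mul]
          ring
      · have hx : HasStrictFDerivAt (fun w : ℂ × ℂ => w.2)
            (ContinuousLinearMap.snd ℂ ℂ ℂ) z :=
          (ContinuousLinearMap.snd ℂ ℂ ℂ).hasStrictFDerivAt
        have := hp.mul hx
        refine (this.congr_of_eventuallyEq ?_).congr_fderiv ?_
        · exact Filter.Eventually.of_forall fun w => by simp [evalPoly]
        · refine ContinuousLinearMap.ext fun w => ?_
          simp [lin2_apply, evalPoly, pderiv_mul]
          ring

def jacCLE (a b c d : ℂ) (h : a * d - b * c ≠ 0) : (ℂ × ℂ) ≃L[ℂ] (ℂ × ℂ) :=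
  ContinuousLinearEquiv.equivOfInverse ((lin2 a b).prod (lin2 c d))
    ((lin2 (d / (a * d - b * c)) (-b / (a * d - b * c))).prod
      (lin2 (-c / (a * d - b * c)) (a / (a * d - b * c))))
    (fun w => by
      refine Prod.ext ?_ ?_ <;>
      · simp only [ContinuousLinearMap.prod_apply, lin2_apply]
        have h1 : d * a - b * c ≠ 0 := by contrapose! h; linear_combination h
        have h2 : a * d - c * b ≠ 0 := by contrapose! h; linear_combination h
        have h3 : d * a - c * b ≠ 0 := by contrapose! h; linear_combination h
        field_simp
        ring)
    (fun w => by
      refine Prod.ext ?_ ?_ <;>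
      · simp only [ContinuousLinearMap.prod_apply, lin2_apply]
        have h1 : d * a - b * c ≠ 0 := by contrapose! h; linear_combination h
        have h2 : a * d - c * b ≠ 0 := by contrapose! h; linear_combination h
        have h3 : d * a - c * b ≠ 0 := by contrapose! h; linear_combination h
        field_simp
        ring)

lemma isLocalHomeomorph_polyMap (P Q : MvPolynomial (Fin 2) ℂ) (hK : IsKeller P Q) :
    IsLocalHomeomorph (polyMap P Q) := by
  obtain ⟨c, hc, hJ⟩ := hK
  intro z
  set a := evalPoly (pderiv 0 P) z
  set b := evalPoly (pderiv 1 P) z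
  set c' := evalPoly (pderiv 0 Q) z
  set d := evalPoly (pderiv 1 Q) z
  have hdet : a * d - b * c' = c := by
    have := congrArg (fun R => evalPoly R z) hJ
    simpa [evalPoly, a, b, c', d, mul_comm] using this
  have hdet' : a * d - b * c' ≠ 0 := by rw [hdet]; exact hc
  have hF : HasStrictFDerivAt (polyMap P Q)
      ((jacCLE a b c' d hdet' : (ℂ × ℂ) ≃L[ℂ] ℂ × ℂ) : (ℂ × ℂ) →L[ℂ] ℂ × ℂ) z := by
    have h1 := hasStrictFDerivAt_evalPoly P z
    have h2 := hasStrictFDerivAt_evalPoly Q z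
    exact HasStrictFDerivAt.prodMk h1 h2
  exact ⟨HasStrictFDerivAt.toOpenPartialHomeomorph _ hF, HasStrictFDerivAt.mem_toOpenPartialHomeomorph_source hF,
    (HasStrictFDerivAt.toOpenPartialHomeomorph_coe hF).symm⟩

lemma continuous_evalPoly (P : MvPolynomial (Fin 2) ℂ) : Continuous (evalPoly P) :=
  continuous_iff_continuousAt.mpr fun z => (hasStrictFDerivAt_evalPoly P z).continuousAt

lemma continuous_polyMap (P Q : MvPolynomial (Fin 2) ℂ) : Continuous (polyMap P Q) :=
  (continuous_evalPoly P).prodMk (continuous_evalPoly Q)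

lemma exists_annihilator (f g h : MvPolynomial (Fin 2) ℂ) :
    ∃ S : MvPolynomial (Fin 3) ℂ, S ≠ 0 ∧ aeval ![f, g, h] S = 0 := by
  by_contra hcon
  push_neg at hcon
  have hinj : Function.Injective (aeval (R := ℂ) ![f, g, h]) := by
    intro S T hST
    by_contra hne
    exact hcon (S - T) (sub_ne_zero.mpr hne) (by rw [map_sub, hST, sub_self])
  set D := max 1 (max f.totalDegree (max g.totalDegree h.totalDegree)) with hDdef
  have hD1 : 1 ≤ D := le_max_left _ _
  set d := 9 * D ^ 2 with hddef
  set N := 3 * d * D with hNdef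
  -- the 3-variable monomial family
  set m3 : (Fin 3 → Fin (d + 1)) → (Fin 3 →₀ ℕ) :=
    fun t => Finsupp.equivFunOnFinite.symm fun i => (t i : ℕ) with hm3
  have hm3inj : Function.Injective m3 := by
    intro s t hst
    have := congrArg Finsupp.equivFunOnFinite hst
    simp only [m3, Equiv.apply_symm_apply] at this
    funext i
    exact Fin.val_injective (congrFun this i)
  set w3 : (Fin 3 → Fin (d + 1)) → MvPolynomial (Fin 3) ℂ :=
    fun t => monomial (m3 t) 1 with hw3
  have hw3li : LinearIndependent ℂ w3 := by
    have hb := (basisMonomials (Fin 3) ℂ).linearIndependent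
    have h2 := hb.comp m3 hm3inj
    have h3 : w3 = (⇑(basisMonomials (Fin 3) ℂ)) ∘ m3 := by
      funext t; simp [w3, coe_basisMonomials]
    rw [h3]; exact h2
  -- the 2-variable monomial family
  set w2 : (Fin 2 → Fin (N + 1)) → MvPolynomial (Fin 2) ℂ :=
    fun t => monomial (Finsupp.equivFunOnFinite.symm fun i => (t i : ℕ)) 1 with hw2
  set W := Submodule.span ℂ (Set.range w2) with hW
  -- the image family lands in W
  have hmem : ∀ t, aeval ![f, g, h] (w3 t) ∈ W := by
    intro t
    have hdeg : (aeval ![f, g, h] (w3 t)).totalDegree ≤ N := by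
      have : aeval ![f, g, h] (w3 t) =
          f ^ (t 0 : ℕ) * (g ^ (t 1 : ℕ) * h ^ (t 2 : ℕ)) := by
        rw [hw3]
        simp only [aeval_monomial, map_one, one_mul]
        rw [Finsupp.prod_fintype]
        · rw [Fin.prod_univ_three]
          simp [m3, mul_assoc]
        · intro i; simp
      rw [this]
      have b1 : (f ^ (t 0 : ℕ)).totalDegree ≤ d * D := by
        refine (totalDegree_pow _ _).trans ?_
        have h1 : (t 0 : ℕ) ≤ d := Nat.lt_succ_iff.mp (t 0).isLt
        have h2 : f.totalDegree ≤ D := le_max_of_le_right (le_max_left _ _)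
        exact Nat.mul_le_mul h1 h2
      have b2 : (g ^ (t 1 : ℕ)).totalDegree ≤ d * D := by
        refine (totalDegree_pow _ _).trans ?_
        have h1 : (t 1 : ℕ) ≤ d := Nat.lt_succ_iff.mp (t 1).isLt
        have h2 : g.totalDegree ≤ D := le_max_of_le_right (le_max_of_le_right (le_max_left _ _))
        exact Nat.mul_le_mul h1 h2
      have b3 : (h ^ (t 2 : ℕ)).totalDegree ≤ d * D := by
        refine (totalDegree_pow _ _).trans ?_
        have h1 : (t 2 : ℕ) ≤ d := Nat.lt_succ_iff.mp (t 2).isLt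
        have h2 : h.totalDegree ≤ D := le_max_of_le_right (le_max_of_le_right (le_max_right _ _))
        exact Nat.mul_le_mul h1 h2
      calc (f ^ (t 0 : ℕ) * (g ^ (t 1 : ℕ) * h ^ (t 2 : ℕ))).totalDegree
          ≤ (f ^ (t 0 : ℕ)).totalDegree + ((g ^ (t 1 : ℕ)).totalDegree
              + (h ^ (t 2 : ℕ)).totalDegree) :=
            (totalDegree_mul _ _).trans (by gcongr; exact totalDegree_mul _ _)
        _ ≤ d * D + (d * D + d * D) := by gcongr
        _ ≤ N := by rw [hNdef]; ring_nf; omega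
    -- now conclude membership in the span
    have hmem2 : aeval ![f, g, h] (w3 t) ∈ restrictDegree (Fin 2) ℂ N := by
      rw [mem_restrictDegree]
      intro s hs i
      have h1 : s i ≤ degreeOf i (aeval ![f, g, h] (w3 t)) :=
        (degreeOf_le_iff.mp (le_refl _)) s hs
      exact h1.trans ((degreeOf_le_totalDegree _ i).trans hdeg)
    rw [restrictDegree, restrictSupport, AddMonoidAlgebra.supported_eq_span_single] at hmem2
    refine Submodule.span_le.mpr ?_ hmem2
    rintro x ⟨n, hn, rfl⟩
    have hn' : ∀ i, n i < N + 1 := fun i => Nat.lt_succ_of_le (hn i)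
    refine Submodule.subset_span ⟨fun i => ⟨n i, hn' i⟩, ?_⟩
    rw [hw2]
    simp only
    have hcoe : (Finsupp.equivFunOnFinite.symm
        fun i => (((⟨n i, hn' i⟩ : Fin (N + 1))) : ℕ)) = n := by
      have : (fun i => (((⟨n i, hn' i⟩ : Fin (N + 1))) : ℕ)) = ⇑n := rfl
      rw [this, Finsupp.equivFunOnFinite_symm_coe]
    rw [hcoe, single_eq_monomial]
  -- linear independence of the composed family within W
  have hli : LinearIndependent ℂ (fun t => (⟨aeval ![f, g, h] (w3 t), hmem t⟩ : W)) := by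
    have hL : LinearIndependent ℂ (fun t => aeval ![f, g, h] (w3 t)) := by
      have := hw3li.map' (aeval (R := ℂ) ![f, g, h]).toLinearMap
        (LinearMap.ker_eq_bot.mpr hinj)
      simpa [Function.comp_def] using this
    exact hL.of_comp W.subtype
  haveI : Module.Finite ℂ W := Module.Finite.span_of_finite ℂ (Set.finite_range w2)
  have hcard := hli.fintype_card_le_finrank
  have hfr : Module.finrank ℂ W ≤ (N + 1) ^ 2 := by
    have h1 : Module.finrank ℂ W ≤ (Set.range w2).toFinset.card := by
      classical
      exact finrank_span_le_card _
    refine h1.trans ?_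
    have : (Set.range w2).toFinset = Finset.univ.image w2 := by
      classical
      ext x; simp
    rw [this]
    refine (Finset.card_image_le).trans ?_
    simp [Fintype.card_fun]
  have hcard2 : (d + 1) ^ 3 ≤ (N + 1) ^ 2 := by
    have hcf : Fintype.card (Fin 3 → Fin (d + 1)) = (d + 1) ^ 3 := by
      simp [Fintype.card_fun]
    rw [hcf] at hcard
    exact hcard.trans hfr
  have hx : d = 9 * D ^ 2 := hddef
  have hy : N = 27 * D ^ 3 := by rw [hNdef, hddef]; ring
  rw [hx, hy] at hcard2
  have hD0 : 0 < D := hD1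
  have m1 : D ^ 3 ≤ D ^ 4 := Nat.pow_le_pow_right hD0 (by norm_num)
  have m2 : 0 < D ^ 4 := pow_pos hD0 4
  have e1 : (9 * D ^ 2 + 1) ^ 3 = 729 * D ^ 6 + 243 * D ^ 4 + 27 * D ^ 2 + 1 := by ring
  have e2 : (27 * D ^ 3 + 1) ^ 2 = 729 * D ^ 6 + 54 * D ^ 3 + 1 := by ring
  have e3 : 54 * D ^ 3 < 243 * D ^ 4 + 27 * D ^ 2 := by nlinarith [m1, m2]
  rw [e1, e2] at hcard2
  linarith [hcard2, e3]

lemma root_bound {Nn : ℕ} (a : ℕ → ℂ) (x : ℂ)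
    (hsum : ∑ k ∈ Finset.range (Nn + 1), a k * x ^ k = 0) (hN : a Nn ≠ 0) :
    ‖x‖ ≤ max 1 ((∑ k ∈ Finset.range Nn, ‖a k‖) / ‖a Nn‖) := by
  by_contra hcon
  push_neg at hcon
  have hx1 : 1 < ‖x‖ := lt_of_le_of_lt (le_max_left _ _) hcon
  have hx2 : (∑ k ∈ Finset.range Nn, ‖a k‖) / ‖a Nn‖ < ‖x‖ :=
    lt_of_le_of_lt (le_max_right _ _) hcon
  rcases Nat.eq_zero_or_pos Nn with h0 | hpos
  · subst h0
    simp at hsum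
    exact hN hsum
  have heq : a Nn * x ^ Nn = -∑ k ∈ Finset.range Nn, a k * x ^ k := by
    rw [Finset.sum_range_succ] at hsum
    linear_combination hsum
  have hnorm : ‖a Nn‖ * ‖x‖ ^ Nn ≤ (∑ k ∈ Finset.range Nn, ‖a k‖) * ‖x‖ ^ (Nn - 1) := by
    calc ‖a Nn‖ * ‖x‖ ^ Nn = ‖a Nn * x ^ Nn‖ := by rw [norm_mul, norm_pow]
      _ = ‖∑ k ∈ Finset.range Nn, a k * x ^ k‖ := by rw [heq, norm_neg]
      _ ≤ ∑ k ∈ Finset.range Nn, ‖a k * x ^ k‖ := norm_sum_le _ _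
      _ ≤ ∑ k ∈ Finset.range Nn, ‖a k‖ * ‖x‖ ^ (Nn - 1) := by
          refine Finset.sum_le_sum fun k hk => ?_
          rw [norm_mul, norm_pow]
          refine mul_le_mul_of_nonneg_left ?_ (norm_nonneg _)
          exact pow_le_pow_right₀ hx1.le (Nat.le_sub_one_of_lt (Finset.mem_range.mp hk))
      _ = (∑ k ∈ Finset.range Nn, ‖a k‖) * ‖x‖ ^ (Nn - 1) := by rw [Finset.sum_mul]
  have hxpow : ‖x‖ ^ Nn = ‖x‖ ^ (Nn - 1) * ‖x‖ := by
    conv_lhs => rw [show Nn = (Nn - 1) + 1 by omega]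
    rw [pow_succ]
  have hpowpos : (0:ℝ) < ‖x‖ ^ (Nn - 1) := pow_pos (lt_trans one_pos hx1) _
  have haN : (0:ℝ) < ‖a Nn‖ := norm_pos_iff.mpr hN
  rw [hxpow, ← mul_assoc] at hnorm
  have h3 : ‖a Nn‖ * ‖x‖ ≤ ∑ k ∈ Finset.range Nn, ‖a k‖ := by
    refine le_of_mul_le_mul_right ?_ hpowpos
    have e : ‖a Nn‖ * ‖x‖ * ‖x‖ ^ (Nn - 1) = ‖a Nn‖ * ‖x‖ ^ (Nn - 1) * ‖x‖ := by ring
    rw [e]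
    exact hnorm
  have : ‖x‖ ≤ (∑ k ∈ Finset.range Nn, ‖a k‖) / ‖a Nn‖ := by
    rw [le_div_iff₀ haN]; linarith
  linarith

lemma coord_bounded (F : ℂ × ℂ → ℂ × ℂ) (π : ℂ × ℂ → ℂ)
    (S' : Polynomial (MvPolynomial (Fin 2) ℂ))
    (hvan : ∀ z, Polynomial.eval (π z)
      (S'.map (MvPolynomial.eval ![(F z).1, (F z).2])) = 0)
    (w₀ : ℂ × ℂ) (hw : evalPoly S'.leadingCoeff w₀ ≠ 0)
    (b : ℕ → ℂ × ℂ) (hb : Tendsto (fun i => F (b i)) atTop (nhds w₀)) :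
    ∃ C : ℝ, ∀ᶠ i in atTop, ‖π (b i)‖ ≤ C := by
  set Nn := S'.natDegree with hNn
  set c : ℕ → ℕ → ℂ := fun k i => evalPoly (S'.coeff k) (F (b i)) with hc
  set γ : ℕ → ℂ := fun k => evalPoly (S'.coeff k) w₀ with hγ
  have hγN : γ Nn ≠ 0 := hw
  have htend : ∀ k, Tendsto (fun i => c k i) atTop (nhds (γ k)) := fun k =>
    ((continuous_evalPoly (S'.coeff k)).continuousAt.tendsto).comp hb
  have hsum : ∀ i, ∑ k ∈ Finset.range (Nn + 1), c k i * (π (b i)) ^ k = 0 := by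
    intro i
    have h1 := hvan (b i)
    rw [Polynomial.eval_eq_sum_range' (lt_of_le_of_lt
      (Polynomial.natDegree_map_le) (Nat.lt_succ_self Nn))] at h1
    simpa [Polynomial.coeff_map, evalPoly, c] using h1
  set Γ : ℝ := ∑ k ∈ Finset.range Nn, ‖γ k‖ with hΓ
  have htendnum : Tendsto (fun i => ∑ k ∈ Finset.range Nn, ‖c k i‖) atTop (nhds Γ) := by
    refine tendsto_finset_sum _ fun k _ => (htend k).norm
  have hev1 : ∀ᶠ i in atTop, (∑ k ∈ Finset.range Nn, ‖c k i‖) ≤ Γ + 1 :=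
    htendnum.eventually (eventually_le_nhds (by linarith))
  have hγNpos : (0:ℝ) < ‖γ Nn‖ := norm_pos_iff.mpr hγN
  have hev2 : ∀ᶠ i in atTop, ‖γ Nn‖ / 2 ≤ ‖c Nn i‖ :=
    ((htend Nn).norm).eventually (eventually_ge_nhds (by linarith))
  refine ⟨max 1 ((Γ + 1) / (‖γ Nn‖ / 2)), ?_⟩
  filter_upwards [hev1, hev2] with i h1 h2
  have hcN : c Nn i ≠ 0 := by
    intro h
    rw [h, norm_zero] at h2
    linarith
  have := root_bound (fun k => c k i) (π (b i)) (hsum i) hcN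
  refine this.trans ?_
  have hΓnn : (0:ℝ) ≤ Γ + 1 := by
    have : (0:ℝ) ≤ Γ := Finset.sum_nonneg fun _ _ => norm_nonneg _
    linarith
  refine max_le_max (le_refl 1) ?_
  exact div_le_div₀ hΓnn h1 (by linarith) h2

lemma nonProperSet_subset_zeroSet (P Q : MvPolynomial (Fin 2) ℂ) :
    ∃ R : MvPolynomial (Fin 2) ℂ, R ≠ 0 ∧
      ∀ w ∈ nonProperSet (polyMap P Q), evalPoly R w = 0 := by
  obtain ⟨S, hS0, hSvan⟩ := exists_annihilator (X 0) P Q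
  obtain ⟨T, hT0, hTvan⟩ := exists_annihilator (X 1) P Q
  set F := polyMap P Q with hF
  -- general: convert annihilator to polynomial-coefficient vanishing
  have key : ∀ (U : MvPolynomial (Fin 3) ℂ) (j : Fin 2), aeval ![X j, P, Q] U = 0 →
      ∀ z : ℂ × ℂ, Polynomial.eval (![z.1, z.2] j)
        (Polynomial.map (MvPolynomial.eval ![(F z).1, (F z).2]) (finSuccEquiv ℂ 2 U)) = 0 := by
    intro U j hU z
    have h1 : MvPolynomial.eval ![z.1, z.2] (aeval ![X j, P, Q] U) = 0 := by
      rw [hU]; simp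
    have h2 : MvPolynomial.eval ![z.1, z.2] (aeval ![X j, P, Q] U) =
        MvPolynomial.eval (fun i => MvPolynomial.eval ![z.1, z.2]
          ((![X j, P, Q] : Fin 3 → MvPolynomial (Fin 2) ℂ) i)) U := by
      rw [aeval_def]
      rw [eval₂_comp_left (MvPolynomial.eval ![z.1, z.2])
        (algebraMap ℂ (MvPolynomial (Fin 2) ℂ)) ![X j, P, Q] U]
      have hk : (MvPolynomial.eval ![z.1, z.2]).comp
          (algebraMap ℂ (MvPolynomial (Fin 2) ℂ)) = RingHom.id ℂ := by
        ext r
        simp [MvPolynomial.algebraMap_eq]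
      rw [hk]
      rfl
    have h3 : (fun i => MvPolynomial.eval ![z.1, z.2]
        ((![X j, P, Q] : Fin 3 → MvPolynomial (Fin 2) ℂ) i)) =
        (![(![z.1, z.2] j), (F z).1, (F z).2] : Fin 3 → ℂ) := by
      funext i
      fin_cases i
      · simp
      · simp [F, polyMap, evalPoly]
      · simp [F, polyMap, evalPoly]
    have h4 : (![(![z.1, z.2] j), (F z).1, (F z).2] : Fin 3 → ℂ) =
        Fin.cons (![z.1, z.2] j) ![(F z).1, (F z).2] := rfl
    rw [h2, h3, h4, eval_eq_eval_mv_eval'] at h1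
    exact h1
  have hS'0 : finSuccEquiv ℂ 2 S ≠ 0 := fun h =>
    hS0 ((finSuccEquiv ℂ 2).injective (h.trans (map_zero _).symm))
  have hT'0 : finSuccEquiv ℂ 2 T ≠ 0 := fun h =>
    hT0 ((finSuccEquiv ℂ 2).injective (h.trans (map_zero _).symm))
  set S' := finSuccEquiv ℂ 2 S with hS'
  set T' := finSuccEquiv ℂ 2 T with hT'
  refine ⟨S'.leadingCoeff * T'.leadingCoeff,
    mul_ne_zero (Polynomial.leadingCoeff_ne_zero.mpr hS'0)
      (Polynomial.leadingCoeff_ne_zero.mpr hT'0), ?_⟩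
  intro w hw
  by_contra hne
  have hmul : evalPoly (S'.leadingCoeff * T'.leadingCoeff) w =
      evalPoly S'.leadingCoeff w * evalPoly T'.leadingCoeff w := by simp [evalPoly]
  rw [hmul] at hne
  obtain ⟨h1, h2⟩ := mul_ne_zero_iff.mp hne
  obtain ⟨b, hbnorm, hbF⟩ := hw
  obtain ⟨C1, hC1⟩ := coord_bounded F (fun z => z.1) S' (key S 0 hSvan) w h1 b hbF
  obtain ⟨C2, hC2⟩ := coord_bounded F (fun z => z.2) T' (key T 1 hTvan) w h2 b hbF
  have hbig : ∀ᶠ i in atTop, max C1 C2 < ‖b i‖ := hbnorm.eventually_gt_atTop _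
  obtain ⟨i, hi1, hi2, hi3⟩ := (hC1.and (hC2.and hbig)).exists
  have hle : ‖b i‖ ≤ max C1 C2 := by
    rw [Prod.norm_def]
    exact sup_le (hi1.trans (le_max_left _ _)) (hi2.trans (le_max_right _ _))
  exact absurd hle (not_le.mpr hi3)

lemma line_poly (R : MvPolynomial (Fin 2) ℂ) (a v : ℂ × ℂ) :
    ∃ g : Polynomial ℂ, ∀ t : ℂ, Polynomial.eval t g = evalPoly R (a + t • v) := by
  refine ⟨aeval (fun i => Polynomial.C (![a.1, a.2] i) +
    Polynomial.X * Polynomial.C (![v.1, v.2] i)) R, fun t => ?_⟩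
  rw [aeval_def]
  rw [show Polynomial.eval t = (Polynomial.evalRingHom t : Polynomial ℂ → ℂ) from rfl]
  rw [eval₂_comp_left (Polynomial.evalRingHom t) (algebraMap ℂ (Polynomial ℂ)) _ R]
  have hk : (Polynomial.evalRingHom t).comp (algebraMap ℂ (Polynomial ℂ)) = RingHom.id ℂ := by
    ext r; simp
  rw [hk]
  have hv : ((Polynomial.evalRingHom t : Polynomial ℂ → ℂ) ∘ fun i =>
      Polynomial.C (![a.1, a.2] i) + Polynomial.X * Polynomial.C (![v.1, v.2] i)) =
      ![(a + t • v).1, (a + t • v).2] := by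
    have h1 : (a + t • v).1 = a.1 + t * v.1 := rfl
    have h2 : (a + t • v).2 = a.2 + t * v.2 := rfl
    funext i
    fin_cases i
    · simp [h1]; ring
    · simp [h2]; ring
  rw [hv]
  rfl

lemma exists_ne_zero_point {R : MvPolynomial (Fin 2) ℂ} (hR : R ≠ 0) :
    ∃ p : ℂ × ℂ, evalPoly R p ≠ 0 := by
  by_contra hcon
  push_neg at hcon
  apply hR
  apply MvPolynomial.funext (R := ℂ)
  intro x
  have hx : x = ![x 0, x 1] := by
    funext i; fin_cases i <;> rfl
  have := hcon (x 0, x 1)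
  rw [map_zero]
  rw [hx]
  exact this

lemma infinite_small_ball (δ : ℝ) (hδ : 0 < δ) : {t : ℂ | ‖t‖ < δ}.Infinite := by
  apply Set.infinite_of_injective_forall_mem (f := fun n : ℕ => ((δ / (n + 2) : ℝ) : ℂ))
  case hi =>
    intro m n hmn
    have hm : (δ / ((m : ℝ) + 2)) = (δ / ((n : ℝ) + 2)) :=
      Complex.ofReal_inj.mp hmn
    have hmpos : (0:ℝ) < (m : ℝ) + 2 := by positivity
    have hnpos : (0:ℝ) < (n : ℝ) + 2 := by positivity
    rw [div_eq_div_iff (ne_of_gt hmpos) (ne_of_gt hnpos)] at hm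
    have h4 : ((n : ℝ) + 2) = (m : ℝ) + 2 :=
      mul_left_cancel₀ (ne_of_gt hδ) hm
    have h5 : (n : ℝ) = (m : ℝ) := by linarith
    exact_mod_cast h5.symm
  case hf =>
    intro n
    have hnp : (0:ℝ) < (n : ℝ) + 2 := by positivity
    have hn2 : (2:ℝ) ≤ (n : ℝ) + 2 := by linarith [Nat.cast_nonneg (α := ℝ) n]
    simp only [Set.mem_setOf_eq, Complex.norm_real, Real.norm_eq_abs]
    rw [abs_of_pos (by positivity)]
    rw [div_lt_iff₀ hnp]
    nlinarith

lemma dense_nonzero {R : MvPolynomial (Fin 2) ℂ} (hR : R ≠ 0) :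
    Dense {w : ℂ × ℂ | evalPoly R w ≠ 0} := by
  obtain ⟨p, hp⟩ := exists_ne_zero_point hR
  rw [Metric.dense_iff]
  intro w ε hε
  by_cases hw : evalPoly R w ≠ 0
  · exact ⟨w, Metric.mem_ball_self hε, hw⟩
  push_neg at hw
  have hpw : p ≠ w := by intro h; rw [h] at hp; exact hp hw
  obtain ⟨g, hg⟩ := line_poly R w (p - w)
  have hg1 : Polynomial.eval 1 g = evalPoly R p := by
    rw [hg]; congr 1
    ext <;> simp
  have hgne : g ≠ 0 := by
    intro h
    rw [h] at hg1
    simp at hg1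
    exact hp hg1.symm
  have hroots : {t : ℂ | g.IsRoot t}.Finite := Polynomial.finite_setOf_isRoot hgne
  set δ := ε / (‖p - w‖ + 1) with hδdef
  have hpwn : (0:ℝ) < ‖p - w‖ := by
    rw [norm_pos_iff]
    exact sub_ne_zero.mpr hpw
  have hδ : 0 < δ := by positivity
  obtain ⟨t, htball, htroot⟩ := ((infinite_small_ball δ hδ).diff hroots).nonempty
  refine ⟨w + t • (p - w), ?_, ?_⟩
  · rw [Metric.mem_ball, dist_eq_norm, add_sub_cancel_left, norm_smul]
    have htb : ‖t‖ < δ := htball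
    have h5 : ‖t‖ * ‖p - w‖ < δ * (‖p - w‖ + 1) := by
      nlinarith [htb, hpwn, norm_nonneg t, hδ]
    have h6 : δ * (‖p - w‖ + 1) = ε := by
      rw [hδdef]; field_simp
    linarith
  · show evalPoly R (w + t • (p - w)) ≠ 0
    rw [← hg]
    exact fun h => htroot h

lemma isPreconnected_of_superset {R : MvPolynomial (Fin 2) ℂ} (hR : R ≠ 0)
    {A : Set (ℂ × ℂ)} (hA : {w : ℂ × ℂ | evalPoly R w ≠ 0} ⊆ A) : IsPreconnected A := by
  obtain ⟨p, hp⟩ := exists_ne_zero_point hR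
  have hpc : IsPathConnected {w : ℂ × ℂ | evalPoly R w ≠ 0} := by
    refine ⟨p, hp, ?_⟩
    intro b hb
    rcases eq_or_ne p b with rfl | hne
    · exact JoinedIn.refl hp
    obtain ⟨g, hg⟩ := line_poly R p (b - p)
    have hg0 : Polynomial.eval 0 g ≠ 0 := by
      rw [hg]; simpa using hp
    have hg1 : Polynomial.eval 1 g ≠ 0 := by
      rw [hg]
      have : p + (1:ℂ) • (b - p) = b := by ext <;> simp
      rw [this]
      exact hb
    have hgne : g ≠ 0 := fun h => hg0 (by rw [h]; simp)
    have hroots : {t : ℂ | g.IsRoot t}.Countable :=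
      (Polynomial.finite_setOf_isRoot hgne).countable
    have hcompl : IsPathConnected {t : ℂ | g.IsRoot t}ᶜ := by
      refine hroots.isPathConnected_compl_of_one_lt_rank ?_
      rw [Complex.rank_real_complex]
      norm_num
    have h0 : (0:ℂ) ∈ {t : ℂ | g.IsRoot t}ᶜ := hg0
    have h1 : (1:ℂ) ∈ {t : ℂ | g.IsRoot t}ᶜ := hg1
    obtain ⟨γ, hγ⟩ := hcompl.joinedIn 0 h0 1 h1
    have hφ : Continuous (fun τ : ℂ => p + τ • (b - p)) :=
      continuous_const.add (continuous_id.smul continuous_const)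
    refine ⟨⟨⟨fun s => p + (γ s) • (b - p), hφ.comp γ.continuous⟩, by
      simp [γ.source], by
      have : p + (1:ℂ) • (b - p) = b := by ext <;> simp
      simp [γ.target, this]⟩, ?_⟩
    · intro s
      show evalPoly R (p + (γ s) • (b - p)) ≠ 0
      rw [← hg]
      exact hγ s
  apply IsPreconnected.subset_closure hpc.isConnected.isPreconnected hA
  have : Dense {w : ℂ × ℂ | evalPoly R w ≠ 0} := dense_nonzero hR
  rw [dense_iff_closure_eq] at this
  rw [this]
  exact Set.subset_univ A

lemma isClosed_nonProperSet (F : ℂ × ℂ → ℂ × ℂ) : IsClosed (nonProperSet F) := by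
  rw [← isSeqClosed_iff_isClosed]
  intro x a hx hxa
  choose b hbnorm hbF using hx
  have hsel : ∀ n : ℕ, ∃ i : ℕ, (n:ℝ) ≤ ‖b n i‖ ∧ dist (F (b n i)) (x n) < 1 / (n + 1) := by
    intro n
    have h1 : ∀ᶠ i in atTop, (n:ℝ) ≤ ‖b n i‖ := (hbnorm n).eventually_ge_atTop _
    have h2 : ∀ᶠ i in atTop, dist (F (b n i)) (x n) < 1 / (n + 1) :=
      Metric.tendsto_nhds.mp (hbF n) _ (by positivity)
    exact (h1.and h2).exists
  choose i hi1 hi2 using hsel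
  refine ⟨fun n => b n (i n), ?_, ?_⟩
  · apply tendsto_atTop_mono hi1
    exact tendsto_natCast_atTop_atTop
  · rw [Metric.tendsto_nhds]
    intro ε hε
    have h1 : ∀ᶠ n in atTop, dist (x n) a < ε / 2 :=
      Metric.tendsto_nhds.mp hxa _ (by linarith)
    have h2 : ∀ᶠ n : ℕ in atTop, (1:ℝ) / (n + 1) < ε / 2 := by
      have := tendsto_one_div_add_atTop_nhds_zero_nat (𝕜 := ℝ)
      exact this.eventually (eventually_lt_nhds (by linarith))
    filter_upwards [h1, h2] with n hn1 hn2
    calc dist (F (b n (i n))) a ≤ dist (F (b n (i n))) (x n) + dist (x n) a := dist_triangle _ _ _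
      _ < 1 / (n + 1) + ε / 2 := by exact add_lt_add_of_lt_of_lt (hi2 n) hn1
      _ < ε / 2 + ε / 2 := by linarith [hn2]
      _ = ε := by ring

theorem isCoveringMap_of_proper_localHomeo {E X : Type*} [TopologicalSpace E]
    [TopologicalSpace X] [T2Space E] {f : E → X} (hlh : IsLocalHomeomorph f)
    (hp : IsProperMap f) (hsurj : Function.Surjective f) : IsCoveringMap f := by
  classical
  intro x
  have hfc : IsCompact (f ⁻¹' {x}) := hp.isCompact_preimage isCompact_singleton
  have hdisc : DiscreteTopology (f ⁻¹' {x} : Set E) := by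
    rw [discreteTopology_iff_isOpen_singleton]
    rintro ⟨e, he⟩
    obtain ⟨g, hg, hgf⟩ := hlh e
    have hset : (Subtype.val ⁻¹' g.source : Set (f ⁻¹' {x})) = {⟨e, he⟩} := by
      ext ⟨e', he'⟩
      simp only [Set.mem_preimage, Set.mem_singleton_iff, Subtype.ext_iff]
      constructor
      · intro h
        apply g.injOn h hg
        rw [← hgf]
        exact Set.mem_singleton_iff.mp he' |>.trans (Set.mem_singleton_iff.mp he).symm
      · rintro rfl; exact hg
    rw [← hset]
    exact g.open_source.preimage continuous_subtype_val
  have hfin : (f ⁻¹' {x}).Finite := hfc.finite ⟨hdisc⟩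
  haveI : Fintype (f ⁻¹' {x} : Set E) := hfin.fintype
  set ι := (f ⁻¹' {x} : Set E) with hι
  obtain ⟨e₀, he₀⟩ := hsurj x
  haveI : Nonempty ι := ⟨⟨e₀, he₀⟩⟩
  choose g hgs hgf using fun i : ι => hlh i.1
  obtain ⟨U, hU, hUd⟩ := hfin.t2_separation
  set W : ι → Set E := fun i => (g i).source ∩ U i.1 with hW
  have hWo : ∀ i, IsOpen (W i) := fun i => (g i).open_source.inter (hU i.1).2
  have hWmem : ∀ i : ι, i.1 ∈ W i := fun i => ⟨hgs i, (hU i.1).1⟩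
  have hWsub : ∀ i, W i ⊆ (g i).source := fun i => Set.inter_subset_left
  have hWdisj : ∀ i j : ι, i ≠ j → Disjoint (W i) (W j) := by
    intro i j hij
    have := hUd i.2 j.2 (fun h => hij (Subtype.ext h))
    exact Disjoint.mono Set.inter_subset_right Set.inter_subset_right this
  set V : Set X := (⋂ i, (g i) '' W i) ∩ (f '' (⋃ i, W i)ᶜ)ᶜ with hV
  have hVo : IsOpen V := by
    refine IsOpen.inter (isOpen_iInter_of_finite fun i =>
      (g i).isOpen_image_of_subset_source (hWo i) (hWsub i)) ?_
    exact (hp.isClosedMap _ (isOpen_iUnion fun i => hWo i).isClosed_compl).isOpen_compl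
  have hxV : x ∈ V := by
    constructor
    · refine Set.mem_iInter.mpr fun i => ⟨i.1, hWmem i, ?_⟩
      rw [← hgf i]
      exact i.2
    · rintro ⟨e, he, hfe⟩
      exact he (Set.mem_iUnion.mpr ⟨⟨e, hfe⟩, hWmem ⟨e, hfe⟩⟩)
  have hpre : f ⁻¹' V ⊆ ⋃ i, W i := by
    intro e he
    by_contra hnot
    exact he.2 ⟨e, hnot, rfl⟩
  set W' : ι → Set E := fun i => W i ∩ f ⁻¹' V with hW'
  have himg : ∀ i, (g i) '' (W' i) = V := by
    intro i
    apply Set.Subset.antisymm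
    · rintro v ⟨e, he, rfl⟩
      have : f e = (g i) e := by rw [hgf i]
      rw [← this]
      exact he.2
    · intro v hv
      have hv1 : v ∈ (g i) '' W i := Set.mem_iInter.mp hv.1 i
      obtain ⟨e, he, rfl⟩ := hv1
      have hfe : f e = (g i) e := by rw [hgf i]
      exact ⟨e, ⟨he, by rw [Set.mem_preimage, hfe]; exact hv⟩, rfl⟩
  set ind : E → ι := fun e => if h : ∃ i, e ∈ W i then h.choose else Classical.arbitrary ι
    with hind_def
  have hind : ∀ (i : ι) (e : E), e ∈ W i → ind e = i := by
    intro i e he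
    have h : ∃ j, e ∈ W j := ⟨i, he⟩
    rw [hind_def]
    simp only [dif_pos h]
    by_contra hne
    exact Set.disjoint_left.mp (hWdisj _ _ hne) h.choose_spec he
  have hsymm : ∀ (i : ι) (v : X), v ∈ V →
      (g i).symm v ∈ W' i ∧ f ((g i).symm v) = v := by
    intro i v hv
    rw [← himg i] at hv
    obtain ⟨e, he, rfl⟩ := hv
    have hsrc : e ∈ (g i).source := hWsub i he.1
    rw [(g i).left_inv hsrc]
    exact ⟨he, by rw [hgf i]⟩
  refine IsEvenlyCovered.of_trivialization (t := {
    toFun := fun e => (f e, ind e)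
    invFun := fun q => (g q.2).symm q.1
    source := f ⁻¹' V
    target := V ×ˢ (Set.univ : Set ι)
    map_source' := fun e he => ⟨he, trivial⟩
    map_target' := fun q hq => (hsymm q.2 q.1 hq.1).1.2
    left_inv' := by
      intro e he
      obtain ⟨i, hei⟩ := Set.mem_iUnion.mp (hpre he)
      have hi : ind e = i := hind i e hei
      simp only [hi]
      have hfe : f e = (g i) e := by rw [hgf i]
      rw [hfe, (g i).left_inv (hWsub i hei)]
    right_inv' := by
      rintro ⟨v, i⟩ hq
      obtain ⟨hmem, hfv⟩ := hsymm i v hq.1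
      have : ind ((g i).symm v) = i := hind i _ hmem.1
      simp only [hfv, this]
    open_source := hVo.preimage hlh.continuous
    open_target := hVo.prod isOpen_univ
    continuousOn_toFun := by
      refine ContinuousOn.prodMk (hlh.continuous.continuousOn) ?_
      intro e he
      obtain ⟨i, hei⟩ := Set.mem_iUnion.mp (hpre he)
      have hev : (fun e' => ind e') =ᶠ[𝓝 e] (fun _ => i) :=
        Filter.eventually_of_mem ((hWo i).mem_nhds hei) (fun e' he' => hind i e' he')
      exact (continuousAt_const.congr hev.symm).continuousWithinAt
    continuousOn_invFun := by
      rintro ⟨v, i⟩ hq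
      have hvt : v ∈ (g i).target := by
        have hv1 : v ∈ (g i) '' W i := Set.mem_iInter.mp hq.1.1 i
        obtain ⟨e, he, rfl⟩ := hv1
        exact (g i).map_source (hWsub i he)
      have hO : (g i).target ×ˢ ({i} : Set ι) ∈ 𝓝 ((v, i) : X × ι) := by
        refine IsOpen.mem_nhds ((g i).open_target.prod (isOpen_discrete _)) ⟨hvt, rfl⟩
      have hev : (fun q : X × ι => (g q.2).symm q.1) =ᶠ[𝓝 (v, i)]
          (fun q : X × ι => (g i).symm q.1) := by
        refine Filter.eventually_of_mem hO ?_
        rintro ⟨v', i'⟩ ⟨_, hi'⟩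
        simp only [Set.mem_singleton_iff] at hi'
        rw [hi']
      have hca : ContinuousAt (fun q : X × ι => (g i).symm q.1) (v, i) :=
        ((g i).symm.continuousAt hvt).comp continuousAt_fst
      exact (hca.congr hev.symm).continuousWithinAt
    baseSet := V
    open_baseSet := hVo
    source_eq := rfl
    target_eq := rfl
    proj_toFun := fun e _ => rfl }) hxV

/-- for a Keller map `F`, the restriction
`F : ℂ² \\ F⁻¹(A_F) → ℂ² \\ A_F` is a covering map. -/
theorem keller_covering_off_nonProperSet
    (P Q : MvPolynomial (Fin 2) ℂ) (hK : IsKeller P Q) :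
    IsCoveringMap
      (fun p : (polyMap P Q ⁻¹' (nonProperSet (polyMap P Q))ᶜ : Set (ℂ × ℂ)) =>
        (⟨polyMap P Q p.1, p.2⟩ : ((nonProperSet (polyMap P Q))ᶜ : Set (ℂ × ℂ)))) := by
  classical
  set F := polyMap P Q with hF
  set s := (nonProperSet F)ᶜ with hs
  have hFc : Continuous F := continuous_polyMap P Q
  have hFlh : IsLocalHomeomorph F := isLocalHomeomorph_polyMap P Q hK
  have hso : IsOpen s := (isClosed_nonProperSet F).isOpen_compl
  have hpo : IsOpen (F ⁻¹' s) := hso.preimage hFc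
  -- the restricted map
  have hmapeq : (fun p : (F ⁻¹' s : Set (ℂ × ℂ)) =>
      (⟨F p.1, p.2⟩ : (s : Set (ℂ × ℂ)))) = s.restrictPreimage F := rfl
  -- compact preimages of compacts inside s
  have hcpre : ∀ K : Set (ℂ × ℂ), K ⊆ s → IsCompact K → IsCompact (F ⁻¹' K) := by
    intro K hKs hKc
    refine Metric.isCompact_of_isClosed_isBounded (hKc.isClosed.preimage hFc) ?_
    by_contra hub
    have hseq : ∀ n : ℕ, ∃ z, z ∈ F ⁻¹' K ∧ (n : ℝ) ≤ ‖z‖ := by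
      intro n
      by_contra hcon
      push_neg at hcon
      exact hub (isBounded_iff_forall_norm_le.mpr ⟨n, fun z hz => (hcon z hz).le⟩)
    choose z hzK hzn using hseq
    obtain ⟨a, haK, φ, hφ, hfa⟩ := hKc.tendsto_subseq (x := fun n => F (z n)) hzK
    have hmem : a ∈ nonProperSet F := by
      refine ⟨fun n => z (φ n), ?_, hfa⟩
      refine tendsto_atTop_mono (fun n => ?_) tendsto_natCast_atTop_atTop
      calc (n : ℝ) ≤ (φ n : ℝ) := by exact_mod_cast hφ.le_apply
        _ ≤ ‖z (φ n)‖ := hzn (φ n)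
    exact (hKs haK) hmem
  -- properness of the restriction
  have hproper : IsProperMap (s.restrictPreimage F) := by
    refine isProperMap_iff_isCompact_preimage.mpr ⟨hFc.restrictPreimage, ?_⟩
    intro K' hK'
    have hKc : IsCompact (Subtype.val '' K') := hK'.image continuous_subtype_val
    have hKs : Subtype.val '' K' ⊆ s := by rintro _ ⟨k, _, rfl⟩; exact k.2
    have hC := hcpre _ hKs hKc
    have heq : s.restrictPreimage F ⁻¹' K' =
        Subtype.val ⁻¹' (F ⁻¹' (Subtype.val '' K')) := by
      ext z
      simp only [Set.mem_preimage, Set.restrictPreimage, Set.MapsTo.restrict,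
        Subtype.map, Set.mem_image]
      constructor
      · intro h
        exact ⟨⟨F z.1, z.2⟩, h, rfl⟩
      · rintro ⟨k, hk, hkeq⟩
        have : k = ⟨F z.1, z.2⟩ := Subtype.ext hkeq
        rwa [← this]
    rw [heq]
    rw [Topology.IsEmbedding.isCompact_iff Topology.IsEmbedding.subtypeVal]
    have himg : (Subtype.val '' (Subtype.val ⁻¹' (F ⁻¹' (Subtype.val '' K')) :
        Set (F ⁻¹' s : Set (ℂ × ℂ)))) = F ⁻¹' (Subtype.val '' K') := by
      rw [Subtype.image_preimage_coe]
      apply Set.inter_eq_self_of_subset_right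
      exact Set.preimage_mono hKs
    rw [himg]
    exact hC
  -- local homeomorphism of the restriction
  have hrlh : IsLocalHomeomorph (s.restrictPreimage F) := by
    have hval1 := hpo.isOpenEmbedding_subtypeVal
    have hval2 := hso.isOpenEmbedding_subtypeVal
    have h1 : IsLocalHomeomorph (Subtype.val ∘ (s.restrictPreimage F)) :=
      (hFlh.comp hval1.isLocalHomeomorph : _)
    exact IsLocalHomeomorph.of_comp h1 hval2.isLocalHomeomorph hFc.restrictPreimage
  -- surjectivity of the restriction
  obtain ⟨R, hR0, hRvan⟩ := nonProperSet_subset_zeroSet P Q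
  have hRs : {w : ℂ × ℂ | evalPoly R w ≠ 0} ⊆ s := by
    intro w hw hmem
    exact hw (hRvan w hmem)
  have hrange_open : IsOpen (Set.range F) := hFlh.isOpenMap.isOpen_range
  have hnonempty : ∃ w, w ∈ Set.range F ∩ s := by
    obtain ⟨w, hw1, hw2⟩ := (dense_nonzero hR0).inter_open_nonempty (Set.range F)
      hrange_open ⟨F 0, 0, rfl⟩
    exact ⟨w, hw1, hRs hw2⟩
  haveI : PreconnectedSpace (s : Set (ℂ × ℂ)) :=
    Subtype.preconnectedSpace (isPreconnected_of_superset hR0 hRs)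
  have hsurj : Function.Surjective (s.restrictPreimage F) := by
    rw [← Set.range_eq_univ]
    have hopen : IsOpen (Set.range (s.restrictPreimage F)) := by
      have : Set.range (s.restrictPreimage F) = Subtype.val ⁻¹' (Set.range F) := by
        ext ⟨w, hw⟩
        simp only [Set.mem_range, Set.mem_preimage]
        constructor
        · rintro ⟨⟨z, hz⟩, hzeq⟩
          exact ⟨z, congrArg Subtype.val hzeq⟩
        · rintro ⟨z, hzeq⟩
          have hz : z ∈ F ⁻¹' s := by rw [Set.mem_preimage, hzeq]; exact hw
          exact ⟨⟨z, hz⟩, Subtype.ext hzeq⟩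
      rw [this]
      exact hrange_open.preimage continuous_subtype_val
    have hclosed : IsClosed (Set.range (s.restrictPreimage F)) :=
      hproper.isClosedMap.isClosed_range
    have hne : (Set.range (s.restrictPreimage F)).Nonempty := by
      obtain ⟨w, ⟨z, hzeq⟩, hws⟩ := hnonempty
      have hz : z ∈ F ⁻¹' s := by rw [Set.mem_preimage, hzeq]; exact hws
      exact ⟨⟨w, hws⟩, ⟨z, hz⟩, Subtype.ext hzeq⟩
    exact IsClopen.eq_univ ⟨hclosed, hopen⟩ hne
  rw [hmapeq]
  exact isCoveringMap_of_proper_localHomeo hrlh hproper hsurj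

end
end

section
/- Let P, Q ∈ ℂ[x,y] with J(P,Q) := P_x Q_y − P_y Q_x a nonzero constant, and suppose deg P = deg Q = n with n ≥ 2. Then there exists a nonzero constant c ∈ ℂ such that P₊ = c·Q₊, where P₊ and Q₊ denote the homogeneous components of P and Q of degree n. -/
open MvPolynomial Filter

section AuxiliaryForStatement8

section OneVar

open Polynomial

-- derivative leading coeff facts
lemma deriv_natDegree_leadingCoeff {p : Polynomial ℂ} (hp : p.natDegree ≠ 0) :
    (derivative p).natDegree = p.natDegree - 1 ∧
      (derivative p).coeff (p.natDegree - 1) = p.natDegree * p.leadingCoeff := by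
  have h1 : (derivative p).coeff (p.natDegree - 1) = p.natDegree * p.leadingCoeff := by
    rw [coeff_derivative, show p.natDegree - 1 + 1 = p.natDegree from by omega, leadingCoeff,
      Nat.cast_sub (by omega : 1 ≤ p.natDegree)]
    push_cast
    ring
  refine ⟨?_, h1⟩
  have hp0 : p ≠ 0 := fun h => hp (by simp [h])
  have hlt := natDegree_derivative_lt hp
  have hne : (derivative p).coeff (p.natDegree - 1) ≠ 0 := by
    rw [h1]
    exact mul_ne_zero (Nat.cast_ne_zero.mpr hp) (leadingCoeff_ne_zero.mpr hp0)
  have hle : p.natDegree - 1 ≤ (derivative p).natDegree := le_natDegree_of_ne_zero hne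
  omega

lemma D1 {p q : Polynomial ℂ} (hp : p ≠ 0) (hq : q ≠ 0) (hq' : derivative q ≠ 0)
    (h : derivative p * q = p * derivative q) : p.natDegree = q.natDegree := by
  have hp' : derivative p ≠ 0 := by
    intro h0
    rw [h0, zero_mul] at h
    exact hq' (by simpa [hp] using h.symm)
  have hpn : p.natDegree ≠ 0 := by
    intro h0
    exact hp' (by rw [eq_C_of_natDegree_eq_zero h0]; simp)
  have hqn : q.natDegree ≠ 0 := by
    intro h0
    exact hq' (by rw [eq_C_of_natDegree_eq_zero h0]; simp)
  obtain ⟨hdp, hcp⟩ := deriv_natDegree_leadingCoeff hpn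
  obtain ⟨hdq, hcq⟩ := deriv_natDegree_leadingCoeff hqn
  have hlp := leadingCoeff_ne_zero.mpr hp
  have hlq := leadingCoeff_ne_zero.mpr hq
  have hlc : (derivative p).leadingCoeff * q.leadingCoeff
      = p.leadingCoeff * (derivative q).leadingCoeff := by
    rw [← leadingCoeff_mul, ← leadingCoeff_mul, h]
  have e1 : (derivative p).leadingCoeff = p.natDegree * p.leadingCoeff := by
    rw [leadingCoeff, hdp, hcp]
  have e2 : (derivative q).leadingCoeff = q.natDegree * q.leadingCoeff := by
    rw [leadingCoeff, hdq, hcq]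
  rw [e1, e2] at hlc
  have h2 : (p.natDegree : ℂ) * (p.leadingCoeff * q.leadingCoeff)
      = (q.natDegree : ℂ) * (p.leadingCoeff * q.leadingCoeff) := by linear_combination hlc
  have h3 := mul_right_cancel₀ (mul_ne_zero hlp hlq) h2
  exact_mod_cast h3

lemma oneVarProp {f g : Polynomial ℂ} (hf : f ≠ 0) (hg : g ≠ 0)
    (h : derivative f * g = f * derivative g) :
    ∃ c : ℂ, c ≠ 0 ∧ f = Polynomial.C c * g := by
  by_cases hg' : derivative g = 0
  · have hf' : derivative f = 0 := by
      rw [hg', mul_zero] at h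
      rcases mul_eq_zero.mp h with h | h
      · exact h
      · exact absurd h hg
    obtain ⟨a, ha⟩ : ∃ a, f = Polynomial.C a := ⟨_, eq_C_of_derivative_eq_zero hf'⟩
    obtain ⟨b, hb⟩ : ∃ b, g = Polynomial.C b := ⟨_, eq_C_of_derivative_eq_zero hg'⟩
    have ha0 : a ≠ 0 := fun h0 => hf (by simp [ha, h0])
    have hb0 : b ≠ 0 := fun h0 => hg (by simp [hb, h0])
    exact ⟨a / b, div_ne_zero ha0 hb0, by rw [ha, hb, ← Polynomial.C_mul, div_mul_cancel₀ _ hb0]⟩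
  · have hdeq : f.natDegree = g.natDegree := D1 hf hg hg' h
    set c := f.leadingCoeff / g.leadingCoeff with hc
    have hlf := leadingCoeff_ne_zero.mpr hf
    have hlg := leadingCoeff_ne_zero.mpr hg
    have hc0 : c ≠ 0 := div_ne_zero hlf hlg
    refine ⟨c, hc0, ?_⟩
    by_contra hne
    set p := f - Polynomial.C c * g with hpdef
    have hp0 : p ≠ 0 := fun h0 => hne (by rw [← sub_eq_zero]; exact h0)
    have hrel : derivative p * g = p * derivative g := by
      simp only [hpdef, derivative_sub, derivative_C_mul]
      ring_nf
      linear_combination h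
    have hdp : p.natDegree = g.natDegree := D1 hp0 hg hg' hrel
    have hdlt : p.degree < f.degree := by
      apply degree_sub_lt
      · rw [degree_C_mul hc0, degree_eq_natDegree hf, degree_eq_natDegree hg, hdeq]
      · exact hf
      · rw [leadingCoeff_mul, leadingCoeff_C, hc, div_mul_cancel₀ _ hlg]
    have : p.natDegree < f.natDegree := natDegree_lt_natDegree hp0 hdlt
    omega

end OneVar

noncomputable def phi : MvPolynomial (Fin 2) ℂ →ₐ[ℂ] Polynomial ℂ :=
  aeval ![Polynomial.X, 1]

lemma hdeg (d : Fin 2 →₀ ℕ) : d.degree = d 0 + d 1 := by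
  show ∑ i ∈ d.support, d i = d 0 + d 1
  rw [Finset.sum_subset (Finset.subset_univ d.support)
    (by intro x _ hx; simpa using Finsupp.notMem_support_iff.mp hx)]
  exact Fin.sum_univ_two d

lemma dsum_eq (d : Fin 2 →₀ ℕ) : (d.sum fun _ e => e) = d 0 + d 1 := by
  rw [Finsupp.sum_fintype _ _ (fun _ => rfl)]
  exact Fin.sum_univ_two d

lemma dsum_eq' (d : Fin 2 →₀ ℕ) : (d.sum fun _ => id) = d 0 + d 1 := dsum_eq d

lemma phi_monomial (d : Fin 2 →₀ ℕ) (a : ℂ) :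
    phi (monomial d a) = Polynomial.C a * Polynomial.X ^ (d 0) := by
  rw [phi, aeval_monomial, Finsupp.prod_fintype _ _ (fun _ => pow_zero _), Fin.prod_univ_two]
  simp [Polynomial.C_eq_algebraMap]

lemma mem_support_degree {F : MvPolynomial (Fin 2) ℂ} {n : ℕ} (hF : F.IsHomogeneous n)
    {d : Fin 2 →₀ ℕ} (hd : d ∈ F.support) : d.degree = n := by
  by_contra h
  exact mem_support_iff.mp hd (hF.coeff_eq_zero h)

lemma pderiv_isHomogeneous {F : MvPolynomial (Fin 2) ℂ} {n : ℕ} (i : Fin 2)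
    (hF : F.IsHomogeneous n) : (pderiv i F).IsHomogeneous (n - 1) := by
  conv_lhs => rw [F.as_sum]
  rw [map_sum]
  apply IsHomogeneous.sum
  intro d hd
  have hdn : d.degree = n := mem_support_degree hF hd
  rw [pderiv_monomial]
  rcases Nat.eq_zero_or_pos (d i) with h0 | h0
  · rw [h0]; norm_num; exact isHomogeneous_zero _ _ _
  · apply isHomogeneous_monomial
    rw [hdeg] at hdn ⊢
    simp only [Finsupp.tsub_apply, Finsupp.single_apply]
    fin_cases i <;> simp at h0 ⊢ <;> omega

lemma totalDegree_pderiv_le (i : Fin 2) (f : MvPolynomial (Fin 2) ℂ) {m : ℕ}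
    (hf : f.totalDegree ≤ m + 1) : (pderiv i f).totalDegree ≤ m := by
  conv_lhs => rw [f.as_sum]
  rw [map_sum]
  refine (totalDegree_finset_sum _ _).trans (Finset.sup_le ?_)
  intro d hd
  have hdn : d 0 + d 1 ≤ m + 1 := by
    rw [← dsum_eq]; exact le_trans (le_totalDegree hd) hf
  rw [pderiv_monomial]
  rcases Nat.eq_zero_or_pos (d i) with h0 | h0
  · rw [h0]; norm_num
  · refine (totalDegree_monomial_le _ _).trans ?_
    rw [dsum_eq']
    simp only [Finsupp.tsub_apply, Finsupp.single_apply]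
    fin_cases i <;> simp at h0 ⊢ <;> omega

lemma totalDegree_sub_homog {P : MvPolynomial (Fin 2) ℂ} {n : ℕ} (hP : P.totalDegree = n) :
    (P - homogeneousComponent n P).totalDegree ≤ n - 1 := by
  rw [MvPolynomial.totalDegree]
  apply Finset.sup_le
  intro d hd
  have hc := mem_support_iff.mp hd
  rw [coeff_sub, coeff_homogeneousComponent] at hc
  rw [dsum_eq]
  by_cases hdn : d.degree = n
  · simp [hdn] at hc
  · simp only [hdn, if_false, sub_zero] at hc
    have : d 0 + d 1 ≤ n := by
      rw [← dsum_eq]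
      exact hP ▸ le_totalDegree (mem_support_iff.mpr hc)
    rw [hdeg] at hdn
    omega

lemma homogComp_ne_zero {P : MvPolynomial (Fin 2) ℂ} {n : ℕ} (hn : n ≠ 0)
    (hP : P.totalDegree = n) : homogeneousComponent n P ≠ 0 := by
  have hP0 : P ≠ 0 := by
    intro h; rw [h] at hP; simp at hP; omega
  obtain ⟨d, hd, hsup⟩ := Finset.exists_mem_eq_sup _ (support_nonempty.mpr hP0)
    (fun d : Fin 2 →₀ ℕ => d.sum fun _ e => e)
  intro h0
  have : coeff d (homogeneousComponent n P) = coeff d P := by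
    rw [coeff_homogeneousComponent, if_pos]
    rw [hdeg, ← dsum_eq, ← hsup, ← hP]
    rfl
  rw [h0] at this
  exact mem_support_iff.mp hd (by simpa using this.symm)

lemma phi_X0 : phi (X 0) = Polynomial.X := by
  simp [phi]

lemma phi_X1 : phi (X 1) = 1 := by
  simp [phi]

lemma phi_pderiv0 (f : MvPolynomial (Fin 2) ℂ) :
    phi (pderiv 0 f) = Polynomial.derivative (phi f) := by
  induction f using MvPolynomial.induction_on with
  | C a => simp [pderiv_C]
  | add p q hp hq => simp [map_add, hp, hq]
  | mul_X p j hp =>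
    have hj : j = 0 ∨ j = 1 := by omega
    rcases hj with rfl | rfl
    · rw [pderiv_mul, map_add, map_mul, map_mul, map_mul, hp, Polynomial.derivative_mul,
        pderiv_X_self, map_one, mul_one, phi_X0, Polynomial.derivative_X, mul_one]
    · rw [pderiv_mul, map_add, map_mul, map_mul, map_mul, hp, Polynomial.derivative_mul,
        pderiv_X_of_ne (by decide), map_zero, mul_zero, add_zero, phi_X1,
        Polynomial.derivative_one, mul_zero, add_zero, mul_one]

lemma phi_pderiv1_monomial {n : ℕ} (d : Fin 2 →₀ ℕ) (a : ℂ) (hd : d.degree = n) :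
    phi (pderiv 1 (monomial d a)) =
      Polynomial.C (n : ℂ) * phi (monomial d a)
        - Polynomial.X * Polynomial.derivative (phi (monomial d a)) := by
  rw [pderiv_monomial, phi_monomial, phi_monomial]
  have h00 : (d - fun₀ | (1 : Fin 2) => 1) 0 = d 0 := by
    simp [Finsupp.tsub_apply]
  rw [h00, Polynomial.derivative_C_mul, Polynomial.derivative_X_pow]
  rw [hdeg] at hd
  rcases Nat.eq_zero_or_pos (d 0) with h0 | h0
  · have h1 : d 1 = n := by omega
    simp [h0, h1, mul_comm]
  · have hpow : (Polynomial.X : Polynomial ℂ) * Polynomial.X ^ (d 0 - 1) = Polynomial.X ^ (d 0) := by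
      conv_rhs => rw [show d 0 = (d 0 - 1) + 1 from by omega]
      rw [pow_succ']
    have hcast : ((n : ℕ) : ℂ) = (d 0 : ℂ) + (d 1 : ℂ) := by exact_mod_cast hd.symm
    rw [hcast]
    simp only [Polynomial.C_mul, Polynomial.C_add]
    linear_combination (Polynomial.C a * Polynomial.C ((d 0 : ℂ))) * hpow

lemma phi_pderiv1 {F : MvPolynomial (Fin 2) ℂ} {n : ℕ} (hF : F.IsHomogeneous n) :
    phi (pderiv 1 F) =
      Polynomial.C (n : ℂ) * phi F - Polynomial.X * Polynomial.derivative (phi F) := by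
  conv_lhs => rw [F.as_sum]
  conv_rhs => rw [F.as_sum]
  rw [map_sum, map_sum, map_sum, map_sum, Finset.mul_sum, Finset.mul_sum,
    ← Finset.sum_sub_distrib]
  exact Finset.sum_congr rfl fun d hd =>
    phi_pderiv1_monomial d _ (mem_support_degree hF hd)

lemma phi_injective_homog {F : MvPolynomial (Fin 2) ℂ} {n : ℕ} (hF : F.IsHomogeneous n)
    (h0 : phi F = 0) : F = 0 := by
  by_contra hne
  obtain ⟨d, hd⟩ := support_nonempty.mpr hne
  have hcoeff : (phi F).coeff (d 0) = coeff d F := by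
    conv_lhs => rw [F.as_sum]
    rw [map_sum, Polynomial.finset_sum_coeff]
    rw [Finset.sum_eq_single d]
    · rw [phi_monomial, Polynomial.coeff_C_mul, Polynomial.coeff_X_pow, if_pos rfl, mul_one]
    · intro d' hd' hne'
      rw [phi_monomial, Polynomial.coeff_C_mul, Polynomial.coeff_X_pow]
      have : ¬ (d 0 = d' 0) := by
        intro heq
        apply hne'
        have h1 : d'.degree = n := mem_support_degree hF hd'
        have h2 : d.degree = n := mem_support_degree hF hd
        rw [hdeg] at h1 h2
        apply Finsupp.ext
        intro i
        have h3 : d' 1 = d 1 := by omega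
        fin_cases i
        · exact heq.symm
        · exact h3
      rw [if_neg this, mul_zero]
    · intro h; exact absurd hd h
  rw [h0] at hcoeff
  simp only [Polynomial.coeff_zero] at hcoeff
  exact mem_support_iff.mp hd hcoeff.symm


end AuxiliaryForStatement8

/-- if `J(P,Q)` is a nonzero constant and `deg P = deg Q = n ≥ 2`,
then the leading homogeneous components are proportional: `P₊ = c • Q₊`. -/
theorem keller_equal_degree_leading_proportional
    (P Q : MvPolynomial (Fin 2) ℂ) (n : ℕ) (hn : 2 ≤ n)
    (hK : IsKeller P Q)
    (hP : P.totalDegree = n) (hQ : Q.totalDegree = n) :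
    ∃ c : ℂ, c ≠ 0 ∧
      MvPolynomial.homogeneousComponent n P =
        MvPolynomial.C c * MvPolynomial.homogeneousComponent n Q := by
  obtain ⟨c0, hc00, hJ⟩ := hK

  set F := homogeneousComponent n P with hFdef
  set G := homogeneousComponent n Q with hGdef
  have hFh : F.IsHomogeneous n := homogeneousComponent_isHomogeneous n P
  have hGh : G.IsHomogeneous n := homogeneousComponent_isHomogeneous n Q
  have hF0 : F ≠ 0 := homogComp_ne_zero (by omega) hP
  have hG0 : G ≠ 0 := homogComp_ne_zero (by omega) hQ
  set P1 := P - F with hP1def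
  set Q1 := Q - G with hQ1def
  -- Step A : leading Jacobian vanishes
  have hJ2 : (pderiv 0 F + pderiv 0 P1) * (pderiv 1 G + pderiv 1 Q1)
      - (pderiv 1 F + pderiv 1 P1) * (pderiv 0 G + pderiv 0 Q1) = MvPolynomial.C c0 := by
    rw [← map_add, ← map_add, ← map_add, ← map_add,
      show F + P1 = P from by rw [hP1def]; ring,
      show G + Q1 = Q from by rw [hQ1def]; ring]
    exact hJ
  have tdP1 : P1.totalDegree ≤ (n - 2) + 1 := le_trans (totalDegree_sub_homog hP) (by omega)
  have tdQ1 : Q1.totalDegree ≤ (n - 2) + 1 := le_trans (totalDegree_sub_homog hQ) (by omega)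
  have tdF : ∀ i, (pderiv i F).totalDegree ≤ n - 1 :=
    fun i => (pderiv_isHomogeneous i hFh).totalDegree_le
  have tdG : ∀ i, (pderiv i G).totalDegree ≤ n - 1 :=
    fun i => (pderiv_isHomogeneous i hGh).totalDegree_le
  have tdP1' : ∀ i, (pderiv i P1).totalDegree ≤ n - 2 :=
    fun i => totalDegree_pderiv_le i P1 tdP1
  have tdQ1' : ∀ i, (pderiv i Q1).totalDegree ≤ n - 2 :=
    fun i => totalDegree_pderiv_le i Q1 tdQ1
  set Rest := (pderiv 0 F * pderiv 1 Q1 + pderiv 0 P1 * pderiv 1 G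
      + pderiv 0 P1 * pderiv 1 Q1)
      - (pderiv 1 F * pderiv 0 Q1 + pderiv 1 P1 * pderiv 0 G
      + pderiv 1 P1 * pderiv 0 Q1) with hRdef
  have tdRest : Rest.totalDegree ≤ 2 * n - 3 := by
    have b1 : ∀ (a b : MvPolynomial (Fin 2) ℂ), a.totalDegree ≤ n - 1 →
        b.totalDegree ≤ n - 2 → (a * b).totalDegree ≤ 2 * n - 3 := by
      intro a b ha hb
      refine (totalDegree_mul a b).trans ?_
      omega
    refine (totalDegree_sub _ _).trans (max_le ?_ ?_) <;>
      refine (totalDegree_add _ _).trans (max_le ((totalDegree_add _ _).trans (max_le ?_ ?_)) ?_)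
    · exact b1 _ _ (tdF 0) (tdQ1' 1)
    · exact (totalDegree_mul _ _).trans (by have := tdP1' 0; have := tdG 1; omega)
    · exact (totalDegree_mul _ _).trans (by have := tdP1' 0; have := tdQ1' 1; omega)
    · exact b1 _ _ (tdF 1) (tdQ1' 0)
    · exact (totalDegree_mul _ _).trans (by have := tdP1' 1; have := tdG 0; omega)
    · exact (totalDegree_mul _ _).trans (by have := tdP1' 1; have := tdQ1' 0; omega)
  have hJlead : pderiv 0 F * pderiv 1 G - pderiv 1 F * pderiv 0 G = 0 := by
    by_contra hne
    have hhom : (pderiv 0 F * pderiv 1 G - pderiv 1 F * pderiv 0 G).IsHomogeneous (2 * n - 2) := by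
      have h1 := ((pderiv_isHomogeneous 0 hFh).mul (pderiv_isHomogeneous 1 hGh)).sub
        ((pderiv_isHomogeneous 1 hFh).mul (pderiv_isHomogeneous 0 hGh))
      rwa [show (n - 1) + (n - 1) = 2 * n - 2 from by omega] at h1
    have htd := hhom.totalDegree hne
    have heq : pderiv 0 F * pderiv 1 G - pderiv 1 F * pderiv 0 G
        = MvPolynomial.C c0 - Rest := by
      rw [hRdef]
      linear_combination hJ2
    have : (pderiv 0 F * pderiv 1 G - pderiv 1 F * pderiv 0 G).totalDegree ≤ 2 * n - 3 := by
      rw [heq]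
      refine (totalDegree_sub _ _).trans (max_le ?_ tdRest)
      simp [totalDegree_C]
    omega
  -- Step B : pass to one variable
  set f := phi F with hfdef
  set g := phi G with hgdef
  have hf0 : f ≠ 0 := fun h => hF0 (phi_injective_homog hFh h)
  have hg0 : g ≠ 0 := fun h => hG0 (phi_injective_homog hGh h)
  have key : Polynomial.derivative f * g = f * Polynomial.derivative g := by
    have h := congrArg phi hJlead
    rw [map_sub, map_mul, map_mul, map_zero, phi_pderiv0, phi_pderiv0,
      phi_pderiv1 hFh, phi_pderiv1 hGh] at h
    have h2 : Polynomial.C (n : ℂ)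
        * (Polynomial.derivative f * g - f * Polynomial.derivative g) = 0 := by
      linear_combination h
    rcases mul_eq_zero.mp h2 with h3 | h3
    · exact absurd h3 (by simp [Polynomial.C_eq_zero]; omega)
    · exact sub_eq_zero.mp h3
  -- Step C : conclude
  obtain ⟨c, hc, hfg⟩ := oneVarProp hf0 hg0 key
  refine ⟨c, hc, ?_⟩
  have hhom : (F - MvPolynomial.C c * G).IsHomogeneous n := hFh.sub (hGh.C_mul c)
  have hphi : phi (F - MvPolynomial.C c * G) = 0 := by
    rw [map_sub, map_mul, show phi (MvPolynomial.C c) = Polynomial.C c from by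
      simp [phi, Polynomial.C_eq_algebraMap]]
    rw [← hfdef, ← hgdef, hfg]
    ring
  have := phi_injective_homog hhom hphi
  linear_combination this
end
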